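/- If V is a 2g-dimensional symplectic F_2-vector space, η ∈ V is nonzero, and ε ∈ V satisfies ⟨η,ε⟩ = 1, then the number of odd quadratic forms q on V (with polarity the symplectic form) satisfying q(η) = 0 equals 2^(g-1)(2^(g-1) - 1). -/

import Mathlib

open Finset

def chi : ZMod 2 → ℤ := fun v => if v = 0 then 1 else -1

lemma chi_add (x y : ZMod 2) : chi (x + y) = chi x * chi y := by revert x y; decide
lemma chi_sq (x : ZMod 2) : chi x * chi x = 1 := by revert x; decide
lemma key1 (u v : ZMod 2) :
    ∑ p : ZMod 2 × ZMod 2, chi (p.1*p.2 + u*p.1 + v*p.2) = 2 * chi (u*v) := by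
  revert u v; decide
lemma key2 (u v : ZMod 2) :
    ∑ p : ZMod 2 × ZMod 2, chi (u*p.1 + v*p.2) = if u = 0 ∧ v = 0 then 4 else 0 := by
  revert u v; decide
lemma indicator (v w : ZMod 2) : (1 - chi v) * (1 + chi w) = if v = 1 ∧ w = 0 then 4 else 0 := by
  revert v w; decide
lemma chi_sum {ι : Type*} (s : Finset ι) (f : ι → ZMod 2) :
    chi (∑ i ∈ s, f i) = ∏ i ∈ s, chi (f i) := by
  induction s using Finset.cons_induction with
  | empty => simp [chi]
  | cons a s ha ih => simp [Finset.sum_cons, Finset.prod_cons, chi_add, ih]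

def myE (g : ℕ) : (Fin g → ZMod 2 × ZMod 2) ≃ ((Fin g ⊕ Fin g) → ZMod 2) where
  toFun h := Sum.elim (fun i => (h i).1) (fun i => (h i).2)
  invFun c := fun i => (c (.inl i), c (.inr i))
  left_inv h := by funext i; rfl
  right_inv c := by funext j; cases j <;> rfl

lemma sumA (g : ℕ) (a : Fin g ⊕ Fin g → ZMod 2) :
    ∑ c : (Fin g ⊕ Fin g) → ZMod 2,
      chi ((∑ i, c (.inl i) * c (.inr i)) + ∑ j, c j * a j)
    = 2 ^ g * chi (∑ i, a (.inl i) * a (.inr i)) := by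
  rw [← Equiv.sum_comp (myE g)]
  have h1 : ∀ h : Fin g → ZMod 2 × ZMod 2,
      ((∑ i, (myE g h) (.inl i) * (myE g h) (.inr i)) + ∑ j, (myE g h) j * a j)
      = ∑ i, ((h i).1 * (h i).2 + a (.inl i) * (h i).1 + a (.inr i) * (h i).2) := by
    intro h
    rw [Fintype.sum_sum_type (fun j => (myE g h) j * a j)]
    simp only [myE, Equiv.coe_fn_mk, Sum.elim_inl, Sum.elim_inr, Finset.sum_add_distrib,
      ← add_assoc]
    congr 1
    · congr 1
      exact Finset.sum_congr rfl fun i _ => mul_comm _ _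
    · exact Finset.sum_congr rfl fun i _ => mul_comm _ _
  calc ∑ h : Fin g → ZMod 2 × ZMod 2, chi _
      = ∑ h : Fin g → ZMod 2 × ZMod 2, ∏ i, chi ((h i).1 * (h i).2 + a (.inl i) * (h i).1 + a (.inr i) * (h i).2) := by
        refine Finset.sum_congr rfl fun h _ => ?_
        rw [h1 h, chi_sum]
    _ = ∏ i, ∑ p : ZMod 2 × ZMod 2, chi (p.1 * p.2 + a (.inl i) * p.1 + a (.inr i) * p.2) := by
        rw [Finset.prod_univ_sum]
        rw [Fintype.piFinset_univ]
    _ = ∏ i : Fin g, (2 * chi (a (.inl i) * a (.inr i))) := by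
        refine Finset.prod_congr rfl fun i _ => key1 _ _
    _ = 2 ^ g * chi (∑ i, a (.inl i) * a (.inr i)) := by
        rw [Finset.prod_mul_distrib, Finset.prod_const, chi_sum]
        simp

lemma sumL (g : ℕ) (a : Fin g ⊕ Fin g → ZMod 2) (ha : ∃ j, a j ≠ 0) :
    ∑ c : (Fin g ⊕ Fin g) → ZMod 2, chi (∑ j, c j * a j) = 0 := by
  rw [← Equiv.sum_comp (myE g)]
  have h1 : ∀ h : Fin g → ZMod 2 × ZMod 2,
      (∑ j, (myE g h) j * a j)
      = ∑ i, (a (.inl i) * (h i).1 + a (.inr i) * (h i).2) := by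
    intro h
    rw [Fintype.sum_sum_type (fun j => (myE g h) j * a j)]
    simp only [myE, Equiv.coe_fn_mk, Sum.elim_inl, Sum.elim_inr, Finset.sum_add_distrib]
    congr 1
    · exact Finset.sum_congr rfl fun i _ => mul_comm _ _
    · exact Finset.sum_congr rfl fun i _ => mul_comm _ _
  calc ∑ h : Fin g → ZMod 2 × ZMod 2, chi _
      = ∑ h : Fin g → ZMod 2 × ZMod 2, ∏ i, chi (a (.inl i) * (h i).1 + a (.inr i) * (h i).2) := by
        refine Finset.sum_congr rfl fun h _ => ?_
        rw [h1 h, chi_sum]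
    _ = ∏ i, ∑ p : ZMod 2 × ZMod 2, chi (a (.inl i) * p.1 + a (.inr i) * p.2) := by
        rw [Finset.prod_univ_sum, Fintype.piFinset_univ]
    _ = 0 := by
        obtain ⟨j, hj⟩ := ha
        have key : ∀ i : Fin g, ∑ p : ZMod 2 × ZMod 2,
            chi (a (.inl i) * p.1 + a (.inr i) * p.2)
            = if a (.inl i) = 0 ∧ a (.inr i) = 0 then 4 else 0 := fun i => key2 _ _
        obtain i | i := j
        · refine Finset.prod_eq_zero (Finset.mem_univ i) ?_
          rw [key i, if_neg]; tauto
        · refine Finset.prod_eq_zero (Finset.mem_univ i) ?_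
          rw [key i, if_neg]; tauto

@[simp] lemma chi_zero : chi 0 = 1 := rfl

lemma pointwise_ind (v w k : ZMod 2) :
    (1 - chi v) * (1 + chi (w + k)) = if v = 1 ∧ w = k then 4 else 0 := by
  revert v w k; decide

lemma pointwise_exp (v w k : ZMod 2) :
    (1 - chi v) * (1 + chi (w + k)) = 1 + chi w * chi k - chi v - chi (v + w) * chi k := by
  revert v w k; decide

lemma count_main (g : ℕ) (a : Fin g ⊕ Fin g → ZMod 2) (ha : ∃ j, a j ≠ 0) :
    (4 : ℤ) * (Nat.card {c : (Fin g ⊕ Fin g) → ZMod 2 //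
      (∑ i, c (.inl i) * c (.inr i)) = 1 ∧
      (∑ j, c j * a j) = ∑ i, a (.inl i) * a (.inr i)} : ℤ)
    = 2 ^ (2*g) - 2 ^ g - 2 ^ g := by
  classical
  set K := ∑ i, a (.inl i) * a (.inr i) with hK
  set P : ((Fin g ⊕ Fin g) → ZMod 2) → Prop := fun c =>
    (∑ i, c (.inl i) * c (.inr i)) = 1 ∧ (∑ j, c j * a j) = K with hP
  have hcard : Nat.card {c // P c} = (Finset.univ.filter P).card := by
    rw [Nat.card_eq_fintype_card, Fintype.card_subtype]
  have hind : ∑ c : (Fin g ⊕ Fin g) → ZMod 2,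
      (1 - chi (∑ i, c (.inl i) * c (.inr i))) * (1 + chi ((∑ j, c j * a j) + K))
      = 4 * ((Finset.univ.filter P).card : ℤ) := by
    have : ∀ c : (Fin g ⊕ Fin g) → ZMod 2,
        (1 - chi (∑ i, c (.inl i) * c (.inr i))) * (1 + chi ((∑ j, c j * a j) + K))
        = if P c then (4:ℤ) else 0 := by
      intro c
      rw [pointwise_ind]
    rw [Finset.sum_congr rfl fun c _ => this c, Finset.sum_ite, Finset.sum_const,
      Finset.sum_const_zero, add_zero, nsmul_eq_mul, mul_comm]
  have hexp : ∑ c : (Fin g ⊕ Fin g) → ZMod 2,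
      (1 - chi (∑ i, c (.inl i) * c (.inr i))) * (1 + chi ((∑ j, c j * a j) + K))
      = 2 ^ (2*g) - 2 ^ g - 2 ^ g := by
    have step : ∀ c : (Fin g ⊕ Fin g) → ZMod 2,
        (1 - chi (∑ i, c (.inl i) * c (.inr i))) * (1 + chi ((∑ j, c j * a j) + K))
        = 1 + chi (∑ j, c j * a j) * chi K - chi (∑ i, c (.inl i) * c (.inr i))
          - chi ((∑ i, c (.inl i) * c (.inr i)) + (∑ j, c j * a j)) * chi K := fun c =>
      pointwise_exp _ _ _
    rw [Finset.sum_congr rfl fun c _ => step c]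
    simp only [Finset.sum_sub_distrib, Finset.sum_add_distrib, ← Finset.sum_mul]
    rw [sumL g a ha, sumA g a, Finset.sum_const, Finset.card_univ]
    have hA : ∑ c : (Fin g ⊕ Fin g) → ZMod 2,
        chi (∑ i, c (.inl i) * c (.inr i)) = 2 ^ g := by
      have := sumA g (fun _ => 0)
      simpa using this
    rw [hA]
    have hcardfun : Fintype.card ((Fin g ⊕ Fin g) → ZMod 2) = 2 ^ (2*g) := by
      rw [Fintype.card_fun]
      simp [two_mul]
    rw [hcardfun, ← hK, nsmul_eq_mul, mul_one, zero_mul, add_zero, mul_assoc, chi_sq, mul_one]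
    push_cast
    ring
  rw [hcard, ← hind, hexp]

/-- Let `V` be a `2g`-dimensional symplectic `F₂`-vector space (with a symplectic
basis), let `η ∈ V` be nonzero and `ε ∈ V` with `⟨η,ε⟩ = 1`. Then the number of odd quadratic
forms `q` on `V` with polarity the symplectic form (i.e. with Arf invariant `1`) satisfying
`q(η) = 0` equals `2^(g-1) * (2^(g-1) - 1)`. -/
theorem stmt2 (g : ℕ) (hg : 1 ≤ g) (V : Type*) [AddCommGroup V] [Module (ZMod 2) V]
    (B : V →ₗ[ZMod 2] V →ₗ[ZMod 2] ZMod 2)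
    (b : Module.Basis (Fin g ⊕ Fin g) (ZMod 2) V)
    (hef : ∀ i j, B (b (Sum.inl i)) (b (Sum.inr j)) = if i = j then 1 else 0)
    (hee : ∀ i j, B (b (Sum.inl i)) (b (Sum.inl j)) = 0)
    (hff : ∀ i j, B (b (Sum.inr i)) (b (Sum.inr j)) = 0)
    (hfe : ∀ i j, B (b (Sum.inr i)) (b (Sum.inl j)) = if i = j then 1 else 0)
    (η ε : V) (hη : η ≠ 0) (hηε : B η ε = 1) :
    Nat.card {q : V → ZMod 2 // (∀ x y, q (x + y) = q x + q y + B x y) ∧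
        ∑ i : Fin g, q (b (Sum.inl i)) * q (b (Sum.inr i)) = 1 ∧ q η = 0} =
      2 ^ (g - 1) * (2 ^ (g - 1) - 1) := by
  classical
  have z2 : ∀ t : ZMod 2, t + t = 0 := by decide
  have z2' : ∀ x y : ZMod 2, x + y = 0 → x = y := by decide
  -- the bilinear form in coordinates
  have hB : ∀ x y : V, B x y =
      (∑ i, b.repr x (Sum.inl i) * b.repr y (Sum.inr i)) +
      ∑ i, b.repr x (Sum.inr i) * b.repr y (Sum.inl i) := by
    intro x y
    have step : B x y = ∑ j, ∑ k, b.repr x j * (b.repr y k * B (b j) (b k)) := by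
      conv_lhs => rw [← b.sum_repr x, ← b.sum_repr y]
      simp only [map_sum, map_smul, LinearMap.sum_apply, LinearMap.smul_apply, smul_eq_mul,
        Finset.mul_sum]
      rw [Finset.sum_comm]
      exact Finset.sum_congr rfl fun j _ => Finset.sum_congr rfl fun k _ => by ring
    rw [step, Fintype.sum_sum_type]
    congr 1
    · refine Finset.sum_congr rfl fun i _ => ?_
      rw [Fintype.sum_sum_type]
      simp [hee, hef, mul_ite, Finset.sum_ite_eq]
    · refine Finset.sum_congr rfl fun i _ => ?_
      rw [Fintype.sum_sum_type]
      simp [hff, hfe, mul_ite, Finset.sum_ite_eq]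
  -- the quadratic form associated to coefficients c
  set Q : ((Fin g ⊕ Fin g) → ZMod 2) → V → ZMod 2 := fun c x =>
    (∑ i, b.repr x (Sum.inl i) * b.repr x (Sum.inr i)) + ∑ j, c j * b.repr x j with hQdef
  have hQadd : ∀ c x y, Q c (x + y) = Q c x + Q c y + B x y := by
    intro c x y
    simp only [hQdef, map_add, Finsupp.coe_add, Pi.add_apply, hB]
    rw [Finset.sum_congr rfl (fun i (_ : i ∈ Finset.univ) => show
      ((b.repr x) (Sum.inl i) + (b.repr y) (Sum.inl i)) *
        ((b.repr x) (Sum.inr i) + (b.repr y) (Sum.inr i))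
      = b.repr x (Sum.inl i) * b.repr x (Sum.inr i) + b.repr y (Sum.inl i) * b.repr y (Sum.inr i)
        + b.repr x (Sum.inl i) * b.repr y (Sum.inr i) + b.repr x (Sum.inr i) * b.repr y (Sum.inl i)
      from by ring)]
    rw [Finset.sum_congr rfl (fun j (_ : j ∈ Finset.univ) => show
      c j * ((b.repr x) j + (b.repr y) j) = c j * b.repr x j + c j * b.repr y j from by ring)]
    simp only [Finset.sum_add_distrib]
    ring
  have hQbasis : ∀ c j, Q c (b j) = c j := by
    intro c j
    simp only [hQdef, Module.Basis.repr_self]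
    rw [Finset.sum_eq_zero, zero_add]
    · simp [Finsupp.single_apply, mul_ite, Finset.sum_ite_eq]
    · intro i _
      rcases j with k | k <;> simp [Finsupp.single_apply]
  -- every form with the cocycle property is of the shape Q c
  have hQrepr : ∀ q : V → ZMod 2, (∀ x y, q (x + y) = q x + q y + B x y) →
      ∀ x, q x = Q (fun j => q (b j)) x := by
    intro q hq
    set c : (Fin g ⊕ Fin g) → ZMod 2 := fun j => q (b j) with hc
    have h2 : (2 : ZMod 2) = 0 := by decide
    have hq0 : q 0 = 0 := by
      have h := hq 0 0
      simp only [add_zero, map_zero, LinearMap.zero_apply] at h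
      linear_combination -h
    have hQ0 : Q c 0 = 0 := by simp [hQdef]
    set D : V →ₗ[ZMod 2] ZMod 2 :=
      { toFun := fun x => q x + Q c x
        map_add' := by
          intro x y
          show q (x + y) + Q c (x + y) = (q x + Q c x) + (q y + Q c y)
          rw [hq, hQadd]
          linear_combination (B x y) * h2
        map_smul' := by
          intro m x
          have hm : m = 0 ∨ m = 1 := by revert m; decide
          rcases hm with rfl | rfl
          · simp [hq0, hQ0]
          · simp } with hD
    have hDzero : D = 0 := by
      apply b.ext
      intro j
      show q (b j) + Q c (b j) = 0
      rw [hQbasis]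
      exact z2 _
    intro x
    have hx : q x + Q c x = 0 := by
      have := LinearMap.congr_fun hDzero x
      simpa [hD] using this
    exact z2' _ _ hx
  have ha : ∃ j, b.repr η j ≠ 0 := by
    by_contra h
    push_neg at h
    exact hη (b.repr.map_eq_zero_iff.mp (Finsupp.ext h))
  -- the bijection with coefficient vectors
  have E : {q : V → ZMod 2 // (∀ x y, q (x + y) = q x + q y + B x y) ∧
        ∑ i : Fin g, q (b (Sum.inl i)) * q (b (Sum.inr i)) = 1 ∧ q η = 0} ≃
      {c : (Fin g ⊕ Fin g) → ZMod 2 //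
        (∑ i, c (Sum.inl i) * c (Sum.inr i)) = 1 ∧
        (∑ j, c j * b.repr η j) =
          ∑ i, b.repr η (Sum.inl i) * b.repr η (Sum.inr i)} := by
    refine
      { toFun := fun qq => ⟨fun j => qq.1 (b j), qq.2.2.1, by
          obtain ⟨q, hq, harf, hqη⟩ := qq
          have h0 : (∑ i, b.repr η (Sum.inl i) * b.repr η (Sum.inr i)) +
              ∑ j, q (b j) * b.repr η j = 0 := by
            have := hQrepr q hq η
            rw [hqη] at this
            exact this.symm
          exact (z2' _ _ h0).symm⟩
        invFun := fun cc => ⟨Q cc.1, hQadd cc.1, by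
            obtain ⟨c, h1, h2⟩ := cc
            calc ∑ i, Q c (b (Sum.inl i)) * Q c (b (Sum.inr i))
                = ∑ i, c (Sum.inl i) * c (Sum.inr i) :=
                  Finset.sum_congr rfl fun i _ => by rw [hQbasis, hQbasis]
              _ = 1 := h1, by
            obtain ⟨c, h1, h2⟩ := cc
            show (∑ i, b.repr η (Sum.inl i) * b.repr η (Sum.inr i)) +
              ∑ j, c j * b.repr η j = 0
            rw [h2]
            exact z2 _⟩
        left_inv := by
          rintro ⟨q, hq, harf, hqη⟩
          apply Subtype.ext
          exact (funext fun x => (hQrepr q hq x).symm)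
        right_inv := by
          rintro ⟨c, h1, h2⟩
          apply Subtype.ext
          exact funext fun j => hQbasis c j }
  rw [Nat.card_congr E]
  -- apply the counting lemma
  have hcm : (4:ℤ) * (Nat.card {c : (Fin g ⊕ Fin g) → ZMod 2 //
      (∑ i, c (Sum.inl i) * c (Sum.inr i)) = 1 ∧
      (∑ j, c j * b.repr η j) =
        ∑ i, b.repr η (Sum.inl i) * b.repr η (Sum.inr i)} : ℤ)
      = 2 ^ (2*g) - 2 ^ g - 2 ^ g := count_main g (fun j => b.repr η j) ha
  set m := g - 1 with hm
  have hgm : g = m + 1 := (Nat.sub_add_cancel hg).symm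
  have hpow : ((2:ℤ) ^ (2*g) - 2 ^ g - 2 ^ g : ℤ)
      = 4 * ((2:ℤ)^m * ((2:ℤ)^m - 1)) := by
    rw [hgm, show 2*(m+1) = m+m+2 from by ring, pow_add, pow_add, pow_add]
    ring
  rw [hpow] at hcm
  have hN : (Nat.card {c : (Fin g ⊕ Fin g) → ZMod 2 //
      (∑ i, c (Sum.inl i) * c (Sum.inr i)) = 1 ∧
      (∑ j, c j * b.repr η j) =
        ∑ i, b.repr η (Sum.inl i) * b.repr η (Sum.inr i)} : ℤ)
      = (2:ℤ)^m * ((2:ℤ)^m - 1) :=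
    mul_left_cancel₀ (by norm_num : (4:ℤ) ≠ 0) hcm
  have hone : (1:ℕ) ≤ 2^m := Nat.one_le_two_pow
  have hcast : ((2^m * (2^m - 1) : ℕ) : ℤ) = (2:ℤ)^m * ((2:ℤ)^m - 1) := by
    push_cast [hone]
    ring
  exact_mod_cast hN.trans hcast.symm
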